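/- A faithful additive code C over F_{q^h} has minimum distance d ≥ 2 if and only if its trace dual C^⊥ is faithful with minimum distance d^⊥ ≥ 2. (Equivalently: C is unfaithful if and only if d^⊥ = 1, where unfaithfulness of C means some coordinate of C takes values in a proper F_q-subspace of F_{q^h}.) -/

import Mathlib

section Aux

variable {Fq K : Type} [Field Fq] [Fintype Fq] [Field K] [Fintype K]
  [DecidableEq K] [Algebra Fq K] {n : ℕ}

/-- The trace bilinear form on `Fin n → K`. -/
noncomputable def traceDotForm (Fq K : Type) [Field Fq] [Field K] [Algebra Fq K] (n : ℕ) :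
    LinearMap.BilinForm Fq (Fin n → K) :=
  LinearMap.mk₂ Fq (fun u v => Algebra.trace Fq K (∑ i, u i * v i))
    (by intro u u' v
        simp [← map_add, ← Finset.sum_add_distrib, add_mul])
    (by intro c u v
        simp [← map_smul, Finset.smul_sum, smul_mul_assoc, Finset.mul_sum])
    (by intro u v v'
        simp [← map_add, ← Finset.sum_add_distrib, mul_add])
    (by intro c u v
        simp [← map_smul, Finset.smul_sum, mul_smul_comm, Finset.mul_sum])

lemma traceDotForm_apply (u v : Fin n → K) :
    traceDotForm Fq K n u v = Algebra.trace Fq K (∑ i, u i * v i) := rfl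

lemma traceDotForm_refl : (traceDotForm Fq K n).IsRefl := by
  intro u v h
  simpa [traceDotForm_apply, mul_comm] using h

lemma traceDotForm_single (u : Fin n → K) (i : Fin n) (a : K) :
    traceDotForm Fq K n u (Pi.single i a) = Algebra.trace Fq K (u i * a) := by
  rw [traceDotForm_apply]
  congr 1
  rw [Finset.sum_eq_single i]
  · simp
  · intro j _ hj; simp [Pi.single_apply, hj]
  · simp

lemma traceDotForm_single_left (u : Fin n → K) (i : Fin n) (a : K) :
    traceDotForm Fq K n (Pi.single i a) u = Algebra.trace Fq K (a * u i) := by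
  rw [traceDotForm_apply]
  congr 1
  rw [Finset.sum_eq_single i]
  · simp
  · intro j _ hj; simp [Pi.single_apply, hj]
  · simp

lemma traceDotForm_nondeg : (traceDotForm Fq K n).Nondegenerate := by
  refine LinearMap.BilinForm.Nondegenerate.ofSeparatingLeft ?_
  intro u hu
  funext i
  refine (traceForm_nondegenerate Fq K).1 (u i) ?_
  intro y
  have := hu (Pi.single i y)
  rwa [traceDotForm_single] at this

/-- If `W` is a proper subspace of `K`, there is a nonzero `a` trace-orthogonal to `W`. -/
lemma exists_trace_perp {W : Submodule Fq K} (hW : W ≠ ⊤) :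
    ∃ a : K, a ≠ 0 ∧ ∀ w ∈ W, Algebra.trace Fq K (w * a) = 0 := by
  by_contra hcon
  push_neg at hcon
  have hbot : (Algebra.traceForm Fq K).orthogonal W = ⊥ := by
    rw [Submodule.eq_bot_iff]
    intro a ha
    by_contra ha0
    obtain ⟨w, hwW, hw⟩ := hcon a ha0
    exact hw (ha w hwW)
  have href : (Algebra.traceForm Fq K).IsRefl := by
    intro x y hxy
    simpa [Algebra.traceForm_apply, mul_comm] using hxy
  have := LinearMap.BilinForm.orthogonal_orthogonal (traceForm_nondegenerate Fq K) href W
  rw [hbot] at this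
  apply hW
  rw [← this, Submodule.eq_top_iff']
  intro x
  rw [LinearMap.BilinForm.mem_orthogonal_iff]
  intro y hy
  simp at hy
  simp [LinearMap.BilinForm.IsOrtho, hy]

/-- Key duality: `C` is unfaithful iff its trace orthogonal has a weight-one vector. -/
lemma unfaithful_iff_orth_weight_one (C : Submodule Fq (Fin n → K)) :
    (∃ i : Fin n, ∃ W : Submodule Fq K, W ≠ ⊤ ∧ ∀ u ∈ C, u i ∈ W) ↔
    (∃ v ∈ (traceDotForm Fq K n).orthogonal C, v ≠ 0 ∧ hammingNorm v ≤ 1) := by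
  constructor
  · rintro ⟨i, W, hW, hCW⟩
    obtain ⟨a, ha0, haW⟩ := exists_trace_perp hW
    refine ⟨Pi.single i a, ?_, ?_, ?_⟩
    · rw [LinearMap.BilinForm.mem_orthogonal_iff]
      intro u hu
      show traceDotForm Fq K n u (Pi.single i a) = 0
      rw [traceDotForm_single]
      exact haW (u i) (hCW u hu)
    · intro h
      apply ha0
      have := congrFun h i
      simpa using this
    · unfold hammingNorm
      refine Finset.card_le_one.mpr ?_
      intro j hj k hk
      simp only [Finset.mem_filter, Finset.mem_univ, true_and, ne_eq] at hj hk
      have hji : j = i := by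
        by_contra hne
        exact hj (by simp [Pi.single_apply, hne])
      have hki : k = i := by
        by_contra hne
        exact hk (by simp [Pi.single_apply, hne])
      rw [hji, hki]
  · rintro ⟨v, hvD, hv0, hv1⟩
    have : ∃ i, v i ≠ 0 := by
      by_contra hc
      push_neg at hc
      exact hv0 (funext fun i => hc i)
    obtain ⟨i, hvi⟩ := this
    -- all other coordinates are zero
    have hzero : ∀ j, j ≠ i → v j = 0 := by
      intro j hj
      by_contra hvj
      unfold hammingNorm at hv1
      have := Finset.card_le_one.mp hv1 j (by simp [hvj]) i (by simp [hvi])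
      exact hj this
    refine ⟨i, LinearMap.ker ((Algebra.traceForm Fq K).flip (v i)), ?_, ?_⟩
    · intro htop
      apply hvi
      refine (traceForm_nondegenerate Fq K).1 (v i) ?_
      intro y
      have hy : y ∈ LinearMap.ker ((Algebra.traceForm Fq K).flip (v i)) := by
        rw [htop]; trivial
      rw [LinearMap.mem_ker] at hy
      simpa [LinearMap.flip_apply, Algebra.traceForm_apply, mul_comm] using hy
    · intro u hu
      rw [LinearMap.mem_ker]
      have := hvD
      rw [LinearMap.BilinForm.mem_orthogonal_iff] at hvD
      have h0 : traceDotForm Fq K n u v = 0 := hvD u hu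
      rw [traceDotForm_apply] at h0
      have hsum : (∑ j, u j * v j) = u i * v i := by
        rw [Finset.sum_eq_single i]
        · intro j _ hj; simp [hzero j hj]
        · simp
      rw [hsum] at h0
      simpa [Algebra.traceForm_apply] using h0

end Aux

/-- A faithful additive code `C` over `F_{q^h}` has minimum distance `≥ 2` if and only if its
trace dual `C^⊥` is faithful with minimum distance `≥ 2`. (Unfaithful means some coordinate
takes values inside an `F_q`-subspace of `F_{q^h}` of dimension at most `h - 1`.) -/
theorem additive_code_faithful_dual_iff
    (q h n : ℕ) (Fq K : Type) [Field Fq] [Fintype Fq] [Field K] [Fintype K]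
    [DecidableEq K] [Algebra Fq K]
    (hq : Fintype.card Fq = q) (hK : Fintype.card K = q ^ h)
    (hfr : Module.finrank Fq K = h)
    (C : Submodule Fq (Fin n → K))
    (D : Set (Fin n → K))
    (hD : D = {v | ∀ u ∈ C, Algebra.trace Fq K (∑ i, u i * v i) = 0}) :
    ((¬ ∃ i : Fin n, ∃ W : Submodule Fq K, Module.finrank Fq W < h ∧ ∀ u ∈ C, u i ∈ W) ∧
      (∀ u ∈ C, u ≠ 0 → 2 ≤ hammingNorm u))
    ↔
    ((¬ ∃ i : Fin n, ∃ W : Submodule Fq K, Module.finrank Fq W < h ∧ ∀ v ∈ D, v i ∈ W) ∧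
      (∀ v ∈ D, v ≠ 0 → 2 ≤ hammingNorm v)) := by
  -- identify D with the orthogonal of C
  have hDo : D = ((traceDotForm Fq K n).orthogonal C : Set (Fin n → K)) := by
    rw [hD]
    ext v
    simp only [Set.mem_setOf_eq, SetLike.mem_coe, LinearMap.BilinForm.mem_orthogonal_iff]
    rfl
  -- translate finrank < h into ≠ ⊤
  have hrank : ∀ W : Submodule Fq K, (Module.finrank Fq W < h ↔ W ≠ ⊤) := by
    intro W
    constructor
    · intro hlt htop
      rw [htop, finrank_top, hfr] at hlt
      omega
    · intro hne
      have := Submodule.finrank_lt (K := Fq) (V := K) hne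
      omega
  -- translate min distance ≥ 2 failing
  have hmd : ∀ S : Set (Fin n → K),
      (¬ ∀ v ∈ S, v ≠ 0 → 2 ≤ hammingNorm v) ↔ (∃ v ∈ S, v ≠ 0 ∧ hammingNorm v ≤ 1) := by
    intro S
    push_neg
    constructor
    · rintro ⟨v, hv, h0, h2⟩; exact ⟨v, hv, h0, by omega⟩
    · rintro ⟨v, hv, h0, h2⟩; exact ⟨v, hv, h0, by omega⟩
  have key1 := unfaithful_iff_orth_weight_one (Fq := Fq) (K := K) C
  have key2 := unfaithful_iff_orth_weight_one (Fq := Fq) (K := K)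
    ((traceDotForm Fq K n).orthogonal C)
  rw [LinearMap.BilinForm.orthogonal_orthogonal traceDotForm_nondeg traceDotForm_refl] at key2
  constructor
  · rintro ⟨hfa, hd⟩
    constructor
    · rintro ⟨i, W, hW, hall⟩
      rw [hrank] at hW
      have : ∃ v ∈ (C : Set (Fin n → K)), v ≠ 0 ∧ hammingNorm v ≤ 1 := by
        obtain ⟨v, hv, h0, h1⟩ := key2.mp ⟨i, W, hW, fun v hv => hall v (by rwa [hDo])⟩
        exact ⟨v, hv, h0, h1⟩
      obtain ⟨v, hv, h0, h1⟩ := this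
      have := hd v hv h0
      omega
    · intro v hv h0
      by_contra h2
      apply hfa
      rw [hDo] at hv
      have : ∃ u ∈ (traceDotForm Fq K n).orthogonal C, u ≠ 0 ∧ hammingNorm u ≤ 1 :=
        ⟨v, hv, h0, by omega⟩
      obtain ⟨i, W, hW, hall⟩ := key1.mpr this
      exact ⟨i, W, (hrank W).mpr hW, hall⟩
  · rintro ⟨hfa, hd⟩
    constructor
    · rintro ⟨i, W, hW, hall⟩
      rw [hrank] at hW
      obtain ⟨v, hv, h0, h1⟩ := key1.mp ⟨i, W, hW, hall⟩
      have := hd v (by rw [hDo]; exact hv) h0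
      omega
    · intro u hu h0
      by_contra h2
      apply hfa
      have : ∃ v ∈ C, v ≠ 0 ∧ hammingNorm v ≤ 1 := ⟨u, hu, h0, by omega⟩
      obtain ⟨i, W, hW, hall⟩ := key2.mpr this
      exact ⟨i, W, (hrank W).mpr hW, fun v hv => hall v (by rwa [hDo] at hv)⟩
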